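/- Fix a maximum level 𝓛 ∈ ℕ and let m denote the 2D Morton index. Let E = (x, y, ℓ) and Ê = (x̂, ŷ, ℓ̂) be quadrilateral elements with m(x, y) < m(x̂, ŷ) such that Ê is not a descendant of E. Then every descendant (x', y', ℓ') of E satisfies m(x, y) ≤ m(x', y') < m(x̂, ŷ); that is, refining E changes the Morton order only locally. -/

import Mathlib

/-- The 2D Morton index: bitwise interleaving of the binary digits of `x` and
`y` (with `L` digits). -/
def morton (L x y : ℕ) : ℕ :=
  ∑ i ∈ Finset.range L, ((x / 2 ^ i % 2) + 2 * (y / 2 ^ i % 2)) * 4 ^ i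

lemma morton_zero (u v : ℕ) : morton 0 u v = 0 := by simp [morton]

lemma morton_succ (L u v : ℕ) :
    morton (L + 1) u v = (u % 2 + 2 * (v % 2)) + 4 * morton L (u / 2) (v / 2) := by
  unfold morton
  rw [Finset.sum_range_succ', Finset.mul_sum]
  simp only [pow_zero, Nat.div_one, mul_one]
  rw [add_comm]
  congr 1
  apply Finset.sum_congr rfl
  intro i _
  rw [Nat.div_div_eq_div_mul, Nat.div_div_eq_div_mul, ← pow_succ']
  ring

lemma div2_lt {L u : ℕ} (hu : u < 2 ^ (L + 1)) : u / 2 < 2 ^ L := by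
  rw [pow_succ] at hu
  exact (Nat.div_lt_iff_lt_mul (by norm_num)).mpr hu

lemma morton_lt : ∀ L u v : ℕ, u < 2 ^ L → v < 2 ^ L → morton L u v < 4 ^ L := by
  intro L
  induction L with
  | zero => intro u v hu hv; simp [morton_zero]
  | succ L ih =>
    intro u v hu hv
    rw [morton_succ, pow_succ]
    have h := ih (u / 2) (v / 2) (div2_lt hu) (div2_lt hv)
    have : u % 2 < 2 := Nat.mod_lt _ (by norm_num)
    have : v % 2 < 2 := Nat.mod_lt _ (by norm_num)
    omega

lemma morton_inj : ∀ L u v u' v' : ℕ, u < 2 ^ L → v < 2 ^ L → u' < 2 ^ L → v' < 2 ^ L →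
    morton L u v = morton L u' v' → u = u' ∧ v = v' := by
  intro L
  induction L with
  | zero => intro u v u' v' hu hv hu' hv' _; simp_all [Nat.lt_one_iff]
  | succ L ih =>
    intro u v u' v' hu hv hu' hv' heq
    rw [morton_succ, morton_succ] at heq
    have h2u : u % 2 < 2 := Nat.mod_lt _ (by norm_num)
    have h2v : v % 2 < 2 := Nat.mod_lt _ (by norm_num)
    have h2u' : u' % 2 < 2 := Nat.mod_lt _ (by norm_num)
    have h2v' : v' % 2 < 2 := Nat.mod_lt _ (by norm_num)
    have hmod : u % 2 = u' % 2 ∧ v % 2 = v' % 2 ∧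
        morton L (u / 2) (v / 2) = morton L (u' / 2) (v' / 2) := by omega
    have := ih (u / 2) (v / 2) (u' / 2) (v' / 2) (div2_lt hu) (div2_lt hv)
      (div2_lt hu') (div2_lt hv') hmod.2.2
    omega

lemma morton_split : ∀ k m u v : ℕ, morton (k + m) u v =
    4 ^ k * morton m (u / 2 ^ k) (v / 2 ^ k) + morton k (u % 2 ^ k) (v % 2 ^ k) := by
  intro k
  induction k with
  | zero => intro m u v; simp [morton_zero]
  | succ k ih =>
    intro m u v
    have hL : k + 1 + m = (k + m) + 1 := by ring
    rw [hL, morton_succ, ih m (u / 2) (v / 2), morton_succ]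
    have hu1 : u / 2 / 2 ^ k = u / 2 ^ (k + 1) := by
      rw [Nat.div_div_eq_div_mul, ← pow_succ']
    have hv1 : v / 2 / 2 ^ k = v / 2 ^ (k + 1) := by
      rw [Nat.div_div_eq_div_mul, ← pow_succ']
    have hu2 : u % 2 ^ (k + 1) % 2 = u % 2 := Nat.mod_mod_of_dvd _ (dvd_pow_self 2 (by omega))
    have hv2 : v % 2 ^ (k + 1) % 2 = v % 2 := Nat.mod_mod_of_dvd _ (dvd_pow_self 2 (by omega))
    have hu3 : u % 2 ^ (k + 1) / 2 = u / 2 % 2 ^ k := by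
      rw [pow_succ', Nat.mod_mul_right_div_self]
    have hv3 : v % 2 ^ (k + 1) / 2 = v / 2 % 2 ^ k := by
      rw [pow_succ', Nat.mod_mul_right_div_self]
    rw [hu1, hv1, hu2, hv2, hu3, hv3, pow_succ]
    ring

lemma div_eq_of_between {p x x' : ℕ} (hp : 0 < p) (hx : x % p = 0)
    (h1 : x ≤ x') (h2 : x' < x + p) : x' / p = x / p := by
  have hd := Nat.div_add_mod x p
  have hmono : x / p ≤ x' / p := Nat.div_le_div_right h1
  have h3 : x' < (x / p + 1) * p := by
    rw [add_mul, one_mul, mul_comm]; omega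
  have := (Nat.div_lt_iff_lt_mul hp).mpr h3
  omega

/-- A quadrilateral element of level `l` in the 1:4 refinement of
`[0, 2^L]²` with maximum level `L`: anchor coordinates `(x, y)` divisible by
`2^(L - l)`. -/
def IsElement (L l x y : ℕ) : Prop :=
  l ≤ L ∧ x < 2 ^ L ∧ y < 2 ^ L ∧ 2 ^ (L - l) ∣ x ∧ 2 ^ (L - l) ∣ y

/-- The element `(x', y')` of level `l'` is a descendant of the element
`(x, y)` of level `l`. -/
def Descendant (L l x y l' x' y' : ℕ) : Prop :=
  l ≤ l' ∧ x ≤ x' ∧ x' < x + 2 ^ (L - l) ∧ y ≤ y' ∧ y' < y + 2 ^ (L - l)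

/-- Locality of the Morton order: if `m(E) < m(Ê)` and `Ê` is not a
descendant of `E`, then every descendant of `E` has Morton index in
`[m(E), m(Ê))`. -/
theorem morton_refinement_local (L l lh l' x y xh yh x' y' : ℕ)
    (hE : IsElement L l x y) (hEh : IsElement L lh xh yh)
    (hlt : morton L x y < morton L xh yh)
    (hnd : ¬ Descendant L l x y lh xh yh)
    (hE' : IsElement L l' x' y')
    (hdesc : Descendant L l x y l' x' y') :
    morton L x y ≤ morton L x' y' ∧ morton L x' y' < morton L xh yh := by
  obtain ⟨hlL, hxL, hyL, hdx, hdy⟩ := hE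
  obtain ⟨hlhL, hxhL, hyhL, hdxh, hdyh⟩ := hEh
  obtain ⟨hll', hxx', hx', hyy', hy'⟩ := hdesc
  set k := L - l with hk
  set m := L - k with hm
  have hps : (2:ℕ) ^ (L - l) = 2 ^ k := rfl
  have hkm : L = k + m := by omega
  have hp : (0:ℕ) < 2 ^ k := Nat.pow_pos (by norm_num)
  have hxmod : x % 2 ^ k = 0 := Nat.mod_eq_zero_of_dvd hdx
  have hymod : y % 2 ^ k = 0 := Nat.mod_eq_zero_of_dvd hdy
  have hsplit : ∀ u v : ℕ, morton L u v =
      4 ^ k * morton m (u / 2 ^ k) (v / 2 ^ k) + morton k (u % 2 ^ k) (v % 2 ^ k) := by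
    intro u v; rw [hkm]; exact morton_split k m u v
  have hx'd : x' / 2 ^ k = x / 2 ^ k := div_eq_of_between hp hxmod hxx' hx'
  have hy'd : y' / 2 ^ k = y / 2 ^ k := div_eq_of_between hp hymod hyy' hy'
  have hE0 : morton L x y = 4 ^ k * morton m (x / 2 ^ k) (y / 2 ^ k) := by
    rw [hsplit x y, hxmod, hymod]
    simp [morton]
  have hE'0 : morton L x' y' = 4 ^ k * morton m (x / 2 ^ k) (y / 2 ^ k)
      + morton k (x' % 2 ^ k) (y' % 2 ^ k) := by
    rw [hsplit x' y', hx'd, hy'd]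
  have hlow : morton k (x' % 2 ^ k) (y' % 2 ^ k) < 4 ^ k :=
    morton_lt k _ _ (Nat.mod_lt _ hp) (Nat.mod_lt _ hp)
  refine ⟨by omega, ?_⟩
  have key : morton L x y + 4 ^ k ≤ morton L xh yh := by
    by_contra hcon
    push_neg at hcon
    have hEh0 : morton L xh yh = 4 ^ k * morton m (xh / 2 ^ k) (yh / 2 ^ k)
        + morton k (xh % 2 ^ k) (yh % 2 ^ k) := hsplit xh yh
    have hlowh : morton k (xh % 2 ^ k) (yh % 2 ^ k) < 4 ^ k :=
      morton_lt k _ _ (Nat.mod_lt _ hp) (Nat.mod_lt _ hp)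
    set M := morton m (x / 2 ^ k) (y / 2 ^ k) with hM
    set Mh := morton m (xh / 2 ^ k) (yh / 2 ^ k) with hMh
    have h4 : (0:ℕ) < 4 ^ k := Nat.pow_pos (by norm_num)
    have hMhM : Mh = M := by
      have h1 : 4 ^ k * Mh < 4 ^ k * (M + 1) := by
        calc 4 ^ k * Mh ≤ morton L xh yh := by rw [hEh0]; exact Nat.le_add_right _ _
          _ < morton L x y + 4 ^ k := hcon
          _ = 4 ^ k * (M + 1) := by rw [hE0, mul_add, mul_one]
      have h2 : 4 ^ k * M < 4 ^ k * (Mh + 1) := by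
        calc 4 ^ k * M = morton L x y := hE0.symm
          _ < morton L xh yh := hlt
          _ = 4 ^ k * Mh + morton k (xh % 2 ^ k) (yh % 2 ^ k) := hEh0
          _ < 4 ^ k * (Mh + 1) := by rw [mul_add, mul_one]; omega
      have := Nat.lt_of_mul_lt_mul_left h1
      have := Nat.lt_of_mul_lt_mul_left h2
      omega
    have hbnd : ∀ u : ℕ, u < 2 ^ L → u / 2 ^ k < 2 ^ m := by
      intro u hu
      apply (Nat.div_lt_iff_lt_mul hp).mpr
      calc u < 2 ^ L := hu
        _ = 2 ^ m * 2 ^ k := by rw [← pow_add, add_comm, ← hkm]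
    have hinj := morton_inj m (xh / 2 ^ k) (yh / 2 ^ k) (x / 2 ^ k) (y / 2 ^ k)
      (hbnd xh hxhL) (hbnd yh hyhL) (hbnd x hxL) (hbnd y hyL) hMhM
    have hxd := Nat.div_add_mod xh (2 ^ k)
    have hyd := Nat.div_add_mod yh (2 ^ k)
    have hxhm : xh % 2 ^ k < 2 ^ k := Nat.mod_lt _ hp
    have hyhm : yh % 2 ^ k < 2 ^ k := Nat.mod_lt _ hp
    have hxd0 := Nat.div_add_mod x (2 ^ k)
    have hyd0 := Nat.div_add_mod y (2 ^ k)
    have hxr : xh = x + xh % 2 ^ k := by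
      rw [hinj.1] at hxd; omega
    have hyr : yh = y + yh % 2 ^ k := by
      rw [hinj.2] at hyd; omega
    by_cases hllh : l ≤ lh
    · exact hnd ⟨hllh, by omega, by omega, by omega, by omega⟩
    · have hkk : (2:ℕ) ^ k ∣ 2 ^ (L - lh) := pow_dvd_pow 2 (by omega)
      have hxm0 : xh % 2 ^ k = 0 := Nat.mod_eq_zero_of_dvd (hkk.trans hdxh)
      have hym0 : yh % 2 ^ k = 0 := Nat.mod_eq_zero_of_dvd (hkk.trans hdyh)
      have hxe : xh = x := by omega
      have hye : yh = y := by omega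
      subst hxe; subst hye
      exact absurd hlt (lt_irrefl _)
  omega
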